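/- Let A⁺, A⁻ : ℝ → ℝ and u⁺, u⁻, û, c ∈ ℝ. Assume the Rankine–Hugoniot condition A⁺(u⁺) = A⁻(u⁻), that û lies strictly between u⁻ and u⁺, that c lies strictly between u⁻ and u⁺ with c ≠ û, and that the Kruzkov entropy inequality holds at c. Then sign(u⁺−u⁻)·A⁺(u⁺) ≤ sign(u⁺−u⁻)·[A⁺(c)·𝟙_{(û,u⁺)}(c) + A⁻(c)·𝟙_{(û,u⁻)}(c)]. -/
import Mathlib


open MeasureTheory Filter Set

/-- The Kruzkov entropy inequality at `c` for data `(um, up, uh)`: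
`A⁺(u⁺)·sign(u⁺−c) − 2·sign(u⁺−û)·A⁺(c)·𝟙_{(û,u⁺)}(c) ≤
 A⁻(u⁻)·sign(u⁻−c) − 2·sign(u⁻−û)·A⁻(c)·𝟙_{(û,u⁻)}(c)`. -/
def KruzkovIneq (Ap Am : ℝ → ℝ) (um up uh c : ℝ) : Prop :=
  Ap up * Real.sign (up - c) -
      2 * Real.sign (up - uh) * Ap c * Set.indicator (Set.uIoo uh up) (1 : ℝ → ℝ) c
    ≤ Am um * Real.sign (um - c) -
      2 * Real.sign (um - uh) * Am c * Set.indicator (Set.uIoo uh um) (1 : ℝ → ℝ) c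

theorem stmt_6 (Ap Am : ℝ → ℝ) (up um uh c : ℝ)
    (hRH : Ap up = Am um)
    (huh : uh ∈ Set.uIoo um up)
    (hc : c ∈ Set.uIoo um up) (hcuh : c ≠ uh)
    (hkruz : KruzkovIneq Ap Am um up uh c) :
    Real.sign (up - um) * Ap up ≤
      Real.sign (up - um) *
        (Ap c * Set.indicator (Set.uIoo uh up) (1 : ℝ → ℝ) c +
         Am c * Set.indicator (Set.uIoo uh um) (1 : ℝ → ℝ) c) := by
  unfold KruzkovIneq at hkruz
  rcases lt_trichotomy um up with hmp | hmp | hmp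
  · rw [Set.uIoo_of_lt hmp] at huh hc
    obtain ⟨h1, h2⟩ := huh
    obtain ⟨h3, h4⟩ := hc
    rw [Set.uIoo_of_lt h2, Set.uIoo_of_gt h1] at hkruz ⊢
    rcases hcuh.lt_or_gt with hcu | hcu
    · rw [Set.indicator_of_notMem (by simp [Set.mem_Ioo]; intro h; linarith),
        Set.indicator_of_mem (Set.mem_Ioo.mpr ⟨h3, hcu⟩)] at hkruz ⊢
      rw [Real.sign_of_pos (by linarith : (0:ℝ) < up - c),
        Real.sign_of_neg (by linarith : um - c < 0),
        Real.sign_of_pos (by linarith : (0:ℝ) < up - uh),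
        Real.sign_of_neg (by linarith : um - uh < 0),
        Real.sign_of_pos (by linarith : (0:ℝ) < up - um)] at *
      nlinarith [hkruz]
    · rw [Set.indicator_of_mem (Set.mem_Ioo.mpr ⟨hcu, h4⟩),
        Set.indicator_of_notMem (by simp [Set.mem_Ioo]; intro h; linarith)] at hkruz ⊢
      rw [Real.sign_of_pos (by linarith : (0:ℝ) < up - c),
        Real.sign_of_neg (by linarith : um - c < 0),
        Real.sign_of_pos (by linarith : (0:ℝ) < up - uh),
        Real.sign_of_neg (by linarith : um - uh < 0),
        Real.sign_of_pos (by linarith : (0:ℝ) < up - um)] at *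
      nlinarith [hkruz]
  · rw [hmp, Set.uIoo_self] at huh; exact absurd huh (Set.notMem_empty uh)
  · rw [Set.uIoo_of_gt hmp] at huh hc
    obtain ⟨h1, h2⟩ := huh
    obtain ⟨h3, h4⟩ := hc
    rw [Set.uIoo_of_gt h1, Set.uIoo_of_lt h2] at hkruz ⊢
    rcases hcuh.lt_or_gt with hcu | hcu
    · rw [Set.indicator_of_mem (Set.mem_Ioo.mpr ⟨h3, hcu⟩),
        Set.indicator_of_notMem (by simp [Set.mem_Ioo]; intro h; linarith)] at hkruz ⊢
      rw [Real.sign_of_neg (by linarith : up - c < 0),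
        Real.sign_of_pos (by linarith : (0:ℝ) < um - c),
        Real.sign_of_neg (by linarith : up - uh < 0),
        Real.sign_of_pos (by linarith : (0:ℝ) < um - uh),
        Real.sign_of_neg (by linarith : up - um < 0)] at *
      nlinarith [hkruz]
    · rw [Set.indicator_of_notMem (by simp [Set.mem_Ioo]; intro h; linarith),
        Set.indicator_of_mem (Set.mem_Ioo.mpr ⟨hcu, h4⟩)] at hkruz ⊢
      rw [Real.sign_of_neg (by linarith : up - c < 0),
        Real.sign_of_pos (by linarith : (0:ℝ) < um - c),
        Real.sign_of_neg (by linarith : up - uh < 0),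
        Real.sign_of_pos (by linarith : (0:ℝ) < um - uh),
        Real.sign_of_neg (by linarith : up - um < 0)] at *
      nlinarith [hkruz]
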